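/- For every integer s ≥ 1, every real number c > 0, and every real x with |x − √s| ≤ 2, the series ∑_{n=0}^∞ e^{-cn}·Q_n^s(x) converges and its sum equals (e^{c}+√s)/(e^{c}+e^{-c}+√s−x). -/

import Mathlib

open MeasureTheory Polynomial Filter

/-- The orthogonal polynomials `Q_n^s`: `Q_0 = 1`, `Q_1 = X`,
`X * Q_n = Q_{n+1} + √s * Q_n + Q_{n-1}`. -/
noncomputable def Qpoly (s : ℕ) : ℕ → Polynomial ℝ
  | 0 => 1
  | 1 => Polynomial.X
  | (n + 2) => Polynomial.X * Qpoly s (n + 1)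
      - Polynomial.C (Real.sqrt s) * Qpoly s (n + 1) - Qpoly s n

/-- Chebyshev polynomials of the second kind: `P_0 = 1`, `P_1 = X`,
`X * P_n = P_{n+1} + P_{n-1}`. -/
noncomputable def Ppoly : ℕ → Polynomial ℝ
  | 0 => 1
  | 1 => Polynomial.X
  | (n + 2) => Polynomial.X * Ppoly (n + 1) - Ppoly n

/-- The density of the absolutely continuous part of `ν_s`. -/
noncomputable def nuDensity (s : ℕ) (x : ℝ) : ℝ :=
  Real.sqrt (4 - (x - Real.sqrt s) ^ 2) / (2 * Real.pi * (x * Real.sqrt s + 1))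

/-- The free Meixner measure `ν_s`. -/
noncomputable def nuMeas (s : ℕ) : Measure ℝ :=
  volume.withDensity (fun x => ENNReal.ofReal
      (if |x - Real.sqrt s| ≤ 2 then nuDensity s x else 0))
    + ENNReal.ofReal (1 - 1 / (s : ℝ)) • Measure.dirac (-1 / Real.sqrt s)

/-- The density `f_c`. -/
noncomputable def fc (s : ℕ) (c x : ℝ) : ℝ :=
  (Real.exp c + Real.sqrt s) / (Real.exp c + Real.exp (-c) + Real.sqrt s - x)

/-- The measure `η_c^s = f_c · ν_s + 1_{c<0} ((e^{-c}-e^c)/(e^{-c}+√s)) δ_{e^c+√s+e^{-c}}`. -/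
noncomputable def etaMeas (s : ℕ) (c : ℝ) : Measure ℝ :=
  (nuMeas s).withDensity (fun x => ENNReal.ofReal (fc s c x))
    + (if c < 0 then
        ENNReal.ofReal ((Real.exp (-c) - Real.exp c) / (Real.exp (-c) + Real.sqrt s))
      else 0) • Measure.dirac (Real.exp c + Real.sqrt s + Real.exp (-c))

/-- Total variation distance between two Borel measures on `ℝ`. -/
noncomputable def dTV (μ ν : Measure ℝ) : ℝ :=
  ⨆ A : {A : Set ℝ // MeasurableSet A}, |(μ A.1).toReal - (ν A.1).toReal|

lemma Ppoly_eval_add_two (y : ℝ) (n : ℕ) :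
    (Ppoly (n+2)).eval y = y * (Ppoly (n+1)).eval y - (Ppoly n).eval y := by
  simp [Ppoly]

lemma Qpoly_eval_add_two (s : ℕ) (x : ℝ) (n : ℕ) :
    (Qpoly s (n+2)).eval x
      = (x - Real.sqrt s) * (Qpoly s (n+1)).eval x - (Qpoly s n).eval x := by
  show (Qpoly s (n+2)).eval x = _
  rw [Qpoly]
  simp
  ring

lemma Qpoly_eval_eq (s : ℕ) (x : ℝ) (n : ℕ) :
    (Qpoly s (n+1)).eval x
      = (Ppoly (n+1)).eval (x - Real.sqrt s)
        + Real.sqrt s * (Ppoly n).eval (x - Real.sqrt s)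
    ∧ (Qpoly s (n+2)).eval x
      = (Ppoly (n+2)).eval (x - Real.sqrt s)
        + Real.sqrt s * (Ppoly (n+1)).eval (x - Real.sqrt s) := by
  induction n with
  | zero =>
    constructor
    · simp [Qpoly, Ppoly]
    · rw [Qpoly_eval_add_two, Ppoly_eval_add_two]
      simp [Qpoly, Ppoly]; ring
  | succ n ih =>
    refine ⟨ih.2, ?_⟩
    rw [Qpoly_eval_add_two, ih.1, ih.2]
    simp only [Ppoly_eval_add_two]
    ring

lemma Ppoly_inv (y : ℝ) (n : ℕ) :
    ((Ppoly (n+1)).eval y - (y/2) * (Ppoly n).eval y)^2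
      + (1 - (y/2)^2) * ((Ppoly n).eval y)^2 = 1 := by
  induction n with
  | zero => simp [Ppoly]; ring
  | succ n ih =>
    rw [Ppoly_eval_add_two]
    linear_combination ih

lemma Ppoly_bound (y : ℝ) (hy : |y| ≤ 2) (n : ℕ) :
    |(Ppoly n).eval y| ≤ n + 1 := by
  have hy2 : y^2 ≤ 4 := by nlinarith [abs_nonneg y, sq_abs y]
  have ht : |y/2| ≤ 1 := by rw [abs_div]; simp; linarith [abs_nonneg y, hy]
  induction n with
  | zero => simp [Ppoly]
  | succ n ih =>
    have inv := Ppoly_inv y n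
    have hp2 : 0 ≤ (1 - (y/2)^2) * ((Ppoly n).eval y)^2 := by
      apply mul_nonneg _ (sq_nonneg _); nlinarith
    have ha : |(Ppoly (n+1)).eval y - (y/2) * (Ppoly n).eval y| ≤ 1 := by
      rw [abs_le_one_iff_mul_self_le_one]; nlinarith [inv, hp2]
    have h2 : |(Ppoly (n+1)).eval y| ≤ |(Ppoly (n+1)).eval y - (y/2) * (Ppoly n).eval y|
        + |y/2| * |(Ppoly n).eval y| := by
      calc |(Ppoly (n+1)).eval y|
          = |((Ppoly (n+1)).eval y - (y/2) * (Ppoly n).eval y) + (y/2) * (Ppoly n).eval y| := by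
            ring_nf
        _ ≤ _ := abs_add_le _ _
        _ = _ := by rw [abs_mul]
    have := abs_nonneg ((Ppoly n).eval y)
    push_cast
    nlinarith

theorem stmt3 (s : ℕ) (hs : 1 ≤ s) (c : ℝ) (hc : 0 < c) (x : ℝ)
    (hx : |x - Real.sqrt s| ≤ 2) :
    HasSum (fun n : ℕ => Real.exp (-(c * n)) * (Qpoly s n).eval x)
      ((Real.exp c + Real.sqrt s) / (Real.exp c + Real.exp (-c) + Real.sqrt s - x)) := by
  have hsnn : 0 ≤ Real.sqrt s := Real.sqrt_nonneg _
  set r := Real.exp (-c) with hrdef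
  have hr0 : 0 < r := Real.exp_pos _
  have hr1 : r < 1 := by
    rw [hrdef]
    exact Real.exp_lt_one_iff.2 (by linarith)
  have hec : Real.exp c * r = 1 := by rw [hrdef, ← Real.exp_add]; simp
  have hqb : ∀ n : ℕ, |(Qpoly s n).eval x| ≤ (1 + Real.sqrt s) * (n + 1) := by
    intro n
    match n with
    | 0 => simp [Qpoly]
    | Nat.succ m =>
      rw [(Qpoly_eval_eq s x m).1]
      have b1 := Ppoly_bound _ hx (m+1)
      have b2 := Ppoly_bound _ hx m
      have h := abs_add_le ((Ppoly (m+1)).eval (x - Real.sqrt s))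
        (Real.sqrt s * (Ppoly m).eval (x - Real.sqrt s))
      rw [abs_mul, abs_of_nonneg hsnn] at h
      push_cast
      push_cast at b1 b2
      nlinarith [abs_nonneg ((Ppoly m).eval (x - Real.sqrt s))]
  have hrn : ∀ n : ℕ, Real.exp (-(c * n)) = r ^ n := by
    intro n
    rw [hrdef, ← Real.exp_nat_mul]
    ring_nf
  set f : ℕ → ℝ := fun n => Real.exp (-(c * n)) * (Qpoly s n).eval x with hfdef
  have hfn : ∀ n, f n = r ^ n * (Qpoly s n).eval x := by
    intro n; rw [hfdef]; simp only; rw [hrn]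
  have hsumm : Summable f := by
    have hgeo : Summable (fun n : ℕ => ((n:ℝ)+1) * r^n) := by
      have h1 := summable_pow_mul_geometric_of_norm_lt_one 1
        (show ‖r‖ < 1 by rw [Real.norm_eq_abs, abs_of_pos hr0]; exact hr1)
      have h2 := summable_geometric_of_lt_one hr0.le hr1
      simpa [add_mul, pow_one] using h1.add h2
    apply Summable.of_norm_bounded (hgeo.mul_left (1 + Real.sqrt s))
    intro n
    rw [hfn, Real.norm_eq_abs, abs_mul, abs_pow, abs_of_pos hr0]
    calc r^n * |(Qpoly s n).eval x| ≤ r^n * ((1 + Real.sqrt s) * (n+1)) :=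
          mul_le_mul_of_nonneg_left (hqb n) (pow_nonneg hr0.le n)
      _ = (1 + Real.sqrt s) * (((n:ℝ)+1) * r^n) := by ring
  set S := ∑' n, f n with hSdef
  have hS : HasSum f S := hsumm.hasSum
  have hf0 : f 0 = 1 := by rw [hfn]; simp [Qpoly]
  have hf1 : f 1 = r * x := by rw [hfn]; simp [Qpoly]
  have hf2 : ∀ n, f (n+2) = (x - Real.sqrt s) * r * f (n+1) - r^2 * f n := by
    intro n
    rw [hfn, hfn, hfn, Qpoly_eval_add_two]
    ring
  have h1 : HasSum (fun n => f (n+1)) (S - 1) := by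
    have := (hasSum_nat_add_iff' 1).2 hS
    simpa [hf0] using this
  have h2 : HasSum (fun n => f (n+2)) (S - 1 - r * x) := by
    have := (hasSum_nat_add_iff' 2).2 hS
    simpa [Finset.sum_range_succ, hf0, hf1, sub_sub] using this
  have h4 := (h1.mul_left ((x - Real.sqrt s) * r)).sub (hS.mul_left (r^2))
  rw [show (fun n => (x - Real.sqrt s) * r * f (n+1) - r^2 * f n) = fun n => f (n+2)
    from funext fun n => (hf2 n).symm] at h4
  have heq := h2.unique h4
  have hxle : x - Real.sqrt s ≤ 2 := (abs_le.1 hx).2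
  have h1r : 0 < (1 - r)^2 := pow_pos (by linarith) 2
  have hD : 0 < Real.exp c + r + Real.sqrt s - x := by
    nlinarith [h1r, hec, hr0, hxle]
  have hkey : S * (r * (Real.exp c + r + Real.sqrt s - x)) = 1 + Real.sqrt s * r := by
    linear_combination heq + S * hec
  have hSval : S = (Real.exp c + Real.sqrt s) / (Real.exp c + r + Real.sqrt s - x) := by
    rw [eq_div_iff (ne_of_gt hD)]
    apply mul_right_cancel₀ (ne_of_gt hr0)
    linear_combination hkey - hec
  exact hSval ▸ hS
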